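/- arXiv:1109.0968 — 2 statements merged into one kernel-verified Lean document; each statement's English description precedes it below -/
import Mathlib

section
/- The function h(x) = 10x^2 − (1−x)^3 ln(1−x) (extended by h(1)=10) is convex on [-1,1]; indeed h''(x) = 15 + 5x − 6(1−x)ln(1−x) ≥ 0 for all x ∈ [-1,1). -/
open Set

lemma key9 : ∀ x ∈ Ico (-1:ℝ) 1, 0 ≤ 15 + 5 * x - 6 * (1 - x) * Real.log (1 - x) := by
  intro x hx
  obtain ⟨hx1, hx2⟩ := hx
  have ht0 : (0:ℝ) < 1 - x := by linarith
  have ht2 : (1:ℝ) - x ≤ 2 := by linarith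
  rcases le_or_gt (1 - x) 1 with h1 | h1
  · have hl : Real.log (1 - x) ≤ 0 := Real.log_nonpos ht0.le h1
    nlinarith [mul_nonneg ht0.le (neg_nonneg.mpr hl)]
  · have hlog : Real.log (1 - x) ≤ Real.log 2 := Real.log_le_log ht0 ht2
    have h2 : Real.log 2 < 0.6931471808 := Real.log_two_lt_d9
    have hlp : 0 < Real.log (1 - x) := Real.log_pos h1
    nlinarith [mul_nonneg (by linarith : (0:ℝ) ≤ 2 - (1 - x)) hlp.le]

lemma hasDeriv9 : ∀ x : ℝ, x < 1 →
    HasDerivAt (fun x => 10 * x ^ 2 - (1 - x) ^ 3 * Real.log (1 - x))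
      (20 * x + 3 * (1 - x) ^ 2 * Real.log (1 - x) + (1 - x) ^ 2) x := by
  intro x hx
  have ht0 : (0:ℝ) < 1 - x := by linarith
  have h1 : HasDerivAt (fun x : ℝ => 1 - x) (-1) x := by
    simpa using (hasDerivAt_id x).const_sub 1
  have hlog : HasDerivAt (fun x => Real.log (1 - x)) ((1 - x)⁻¹ * (-1)) x :=
    (Real.hasDerivAt_log ht0.ne').comp x h1
  have hcube : HasDerivAt (fun x : ℝ => (1 - x) ^ 3) (3 * (1 - x) ^ 2 * (-1)) x := by
    simpa using h1.fun_pow 3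
  have hsq : HasDerivAt (fun x : ℝ => 10 * x ^ 2) (10 * (2 * x)) x := by
    simpa using ((hasDerivAt_pow 2 x).const_mul 10)
  have := hsq.fun_sub (hcube.fun_mul hlog)
  convert this using 1
  all_goals try rfl
  field_simp
  ring

lemma hasDeriv9' : ∀ x : ℝ, x < 1 →
    HasDerivAt (fun x => 20 * x + 3 * (1 - x) ^ 2 * Real.log (1 - x) + (1 - x) ^ 2)
      (15 + 5 * x - 6 * (1 - x) * Real.log (1 - x)) x := by
  intro x hx
  have ht0 : (0:ℝ) < 1 - x := by linarith
  have h1 : HasDerivAt (fun x : ℝ => 1 - x) (-1) x := by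
    simpa using (hasDerivAt_id x).const_sub 1
  have hlog : HasDerivAt (fun x => Real.log (1 - x)) ((1 - x)⁻¹ * (-1)) x :=
    (Real.hasDerivAt_log ht0.ne').comp x h1
  have hsq : HasDerivAt (fun x : ℝ => (1 - x) ^ 2) (2 * (1 - x) * (-1)) x := by
    simpa using h1.fun_pow 2
  have hlin : HasDerivAt (fun x : ℝ => 20 * x) 20 x := by
    simpa using (hasDerivAt_id x).const_mul 20
  have := (hlin.fun_add ((hsq.const_mul 3).fun_mul hlog)).fun_add hsq
  convert this using 1
  all_goals try rfl
  field_simp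
  ring

lemma derivEq9 : ∀ x ∈ Ioo (-1:ℝ) 1,
    deriv (fun x => 10 * x ^ 2 - (1 - x) ^ 3 * Real.log (1 - x)) x
      = 20 * x + 3 * (1 - x) ^ 2 * Real.log (1 - x) + (1 - x) ^ 2 := by
  intro x hx
  exact (hasDeriv9 x hx.2).deriv

/-- `h(x) = 10x² − (1−x)³ ln(1−x)` (with `Real.log 0 = 0`, so `h(1) = 10`) is convex
on `[-1,1]`; indeed `h''(x) = 15 + 5x − 6(1−x)ln(1−x) ≥ 0` for all `x ∈ [-1,1)`. -/
theorem stmt9 :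
    ConvexOn ℝ (Icc (-1:ℝ) 1)
      (fun x => 10 * x ^ 2 - (1 - x) ^ 3 * Real.log (1 - x)) ∧
    ∀ x ∈ Ico (-1:ℝ) 1, 0 ≤ 15 + 5 * x - 6 * (1 - x) * Real.log (1 - x) := by
  refine ⟨?_, key9⟩
  have hIoo : interior (Icc (-1:ℝ) 1) = Ioo (-1:ℝ) 1 := interior_Icc
  have hopen : IsOpen (Ioo (-1:ℝ) 1) := isOpen_Ioo
  have hcont : ContinuousOn (fun x : ℝ => 10 * x ^ 2 - (1 - x) ^ 3 * Real.log (1 - x))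
      (Icc (-1:ℝ) 1) := by
    have h1 : Continuous fun x : ℝ => (1 - x) := by continuity
    have h2 : Continuous fun x : ℝ => (1 - x) * Real.log (1 - x) := Real.continuous_mul_log.comp h1
    have : Continuous fun x : ℝ => 10 * x ^ 2 - (1 - x) ^ 2 * ((1 - x) * Real.log (1 - x)) := by
      continuity
    have heq : (fun x : ℝ => 10 * x ^ 2 - (1 - x) ^ 3 * Real.log (1 - x))
        = fun x : ℝ => 10 * x ^ 2 - (1 - x) ^ 2 * ((1 - x) * Real.log (1 - x)) := by
      funext x; ring
    rw [heq]
    exact this.continuousOn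
  refine convexOn_of_deriv2_nonneg (convex_Icc _ _) hcont ?_ ?_ ?_
  · rw [hIoo]
    intro x hx
    exact ((hasDeriv9 x hx.2).differentiableAt.differentiableWithinAt)
  · rw [hIoo]
    intro x hx
    have hev : deriv (fun x => 10 * x ^ 2 - (1 - x) ^ 3 * Real.log (1 - x))
        =ᶠ[nhds x] fun x => 20 * x + 3 * (1 - x) ^ 2 * Real.log (1 - x) + (1 - x) ^ 2 := by
      filter_upwards [hopen.mem_nhds hx] with y hy
      exact derivEq9 y hy
    exact ((hasDeriv9' x hx.2).differentiableAt.congr_of_eventuallyEq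
      hev).differentiableWithinAt
  · rw [hIoo]
    intro x hx
    have hev : deriv (fun x => 10 * x ^ 2 - (1 - x) ^ 3 * Real.log (1 - x))
        =ᶠ[nhds x] fun x => 20 * x + 3 * (1 - x) ^ 2 * Real.log (1 - x) + (1 - x) ^ 2 := by
      filter_upwards [hopen.mem_nhds hx] with y hy
      exact derivEq9 y hy
    have : deriv^[2] (fun x => 10 * x ^ 2 - (1 - x) ^ 3 * Real.log (1 - x)) x
        = 15 + 5 * x - 6 * (1 - x) * Real.log (1 - x) := by
      rw [Function.iterate_succ, Function.iterate_one, Function.comp_apply]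
      rw [Filter.EventuallyEq.deriv_eq hev]
      exact (hasDeriv9' x hx.2).deriv
    rw [this]
    exact key9 x ⟨hx.1.le, hx.2⟩
end

section
/- For every k ∈ ℕ and α ∈ (0,k) with α/2 ∉ ℕ, the k-th modulus of smoothness of |x|^α on [-1,1] satisfies ω_k(|x|^α, δ) ≤ c(α) min{1, δ^α} for all δ > 0, for some constant c(α) depending only on α (take k = ⌈α⌉). -/
open Set Finset

/-- `k`-th symmetric difference `Δ_h^k(f,x)` (the defining sum). -/
noncomputable def symmDiffK (k : ℕ) (h : ℝ) (f : ℝ → ℝ) (x : ℝ) : ℝ :=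
  ∑ i ∈ Finset.range (k + 1),
    ((-1 : ℝ)) ^ (k - i) * (k.choose i : ℝ) * f (x - k * h / 2 + i * h)

/-- `k`-th modulus of smoothness on `[-1,1]`. -/
noncomputable def modulus (k : ℕ) (f : ℝ → ℝ) (t : ℝ) : ℝ :=
  sSup { d | ∃ h x : ℝ, 0 ≤ h ∧ h ≤ t ∧ |x - k * h / 2| ≤ 1 ∧ |x + k * h / 2| ≤ 1 ∧
    d = |symmDiffK k h f x| }

lemma symmDiffK_eq (k : ℕ) (h : ℝ) (f : ℝ → ℝ) (x : ℝ) :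
    symmDiffK k h f x = (-1) ^ k *
      ∑ i ∈ Finset.range (k + 1), (-1 : ℝ) ^ i * (k.choose i : ℝ) * f (x - k * h / 2 + i * h) := by
  rw [symmDiffK, Finset.mul_sum]
  refine Finset.sum_congr rfl fun i hi => ?_
  have hik : i ≤ k := Nat.lt_succ_iff.mp (Finset.mem_range.mp hi)
  have : ((-1 : ℝ)) ^ (k - i) = (-1) ^ k * (-1) ^ i := by
    rw [← pow_add]
    have : k + i = (k - i) + 2 * i := by omega
    rw [this, pow_add, pow_mul]
    norm_num
  rw [this]; ring

lemma symmDiffK_zero (h : ℝ) (f : ℝ → ℝ) (x : ℝ) : symmDiffK 0 h f x = f x := by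
  simp [symmDiffK]

lemma symmDiffK_succ (k : ℕ) (h : ℝ) (f : ℝ → ℝ) (x : ℝ) :
    symmDiffK (k + 1) h f x = symmDiffK k h f (x + h / 2) - symmDiffK k h f (x - h / 2) := by
  have ha1 : ∀ i : ℕ, x + h / 2 - k * h / 2 + i * h = x - ((k : ℝ)+1) * h / 2 + ((i+1 : ℕ) : ℝ) * h := by
    intro i; push_cast; ring
  have ha2 : ∀ i : ℕ, x - h / 2 - k * h / 2 + i * h = x - ((k : ℝ)+1) * h / 2 + i * h := by
    intro i; push_cast; ring
  set a := x - ((k : ℝ)+1) * h / 2 with hadef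
  have hcast : ((k+1 : ℕ) : ℝ) = (k : ℝ) + 1 := by push_cast; ring
  rw [symmDiffK_eq, symmDiffK_eq, symmDiffK_eq]
  simp only [ha1, ha2, hcast]
  rw [Finset.sum_range_succ' (fun i => (-1 : ℝ) ^ i * ((k+1).choose i : ℝ) * f (a + i * h)) (k+1)]
  have hsplit : (∑ i ∈ Finset.range (k + 1),
      (-1 : ℝ) ^ (i+1) * (((k+1).choose (i+1) : ℕ) : ℝ) * f (a + ((i+1 : ℕ) : ℝ) * h))
      = ∑ i ∈ Finset.range (k + 1),
          (-((-1 : ℝ) ^ i * (k.choose i : ℝ) * f (a + ((i+1 : ℕ) : ℝ) * h))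
           - (-1 : ℝ) ^ i * (k.choose (i+1) : ℝ) * f (a + ((i+1 : ℕ) : ℝ) * h)) := by
    refine Finset.sum_congr rfl fun i _ => ?_
    rw [Nat.choose_succ_succ]
    push_cast
    ring
  rw [hsplit, Finset.sum_sub_distrib, Finset.sum_neg_distrib]
  have hB : (∑ i ∈ Finset.range (k + 1), (-1 : ℝ) ^ i * (k.choose (i+1) : ℝ) * f (a + ((i+1 : ℕ) : ℝ) * h))
      = f (a + ((0 : ℕ) : ℝ) * h)
        - ∑ i ∈ Finset.range (k + 1), (-1 : ℝ) ^ i * (k.choose i : ℝ) * f (a + (i : ℝ) * h) := by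
    rw [Finset.sum_range_succ (fun i => (-1 : ℝ) ^ i * (k.choose (i+1) : ℝ) * f (a + ((i+1 : ℕ) : ℝ) * h)) k,
      Finset.sum_range_succ' (fun i => (-1 : ℝ) ^ i * (k.choose i : ℝ) * f (a + (i : ℝ) * h)) k]
    simp only [Nat.choose_succ_self, Nat.cast_zero, Nat.cast_ofNat, Nat.choose_zero_right,
      Nat.cast_one, pow_zero, one_mul, Nat.cast_zero]
    push_cast
    have hc : ∀ i ∈ Finset.range k, (-1:ℝ)^(i+1) * (k.choose (i+1) : ℝ) * f (a + ((i:ℝ)+1)*h)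
        = -((-1:ℝ)^i * (k.choose (i+1) : ℝ) * f (a + ((i:ℝ)+1)*h)) := by intro i _; ring
    rw [Finset.sum_congr rfl hc, Finset.sum_neg_distrib]
    ring
  rw [hB]
  simp only [Nat.cast_zero, Nat.choose_zero_right, Nat.cast_one, pow_zero, one_mul, zero_mul, add_zero]
  ring

lemma symmDiffK_congr (k : ℕ) (h : ℝ) (f g : ℝ → ℝ) (x : ℝ)
    (hfg : ∀ i ∈ Finset.range (k+1), f (x - k * h / 2 + i * h) = g (x - k * h / 2 + i * h)) :
    symmDiffK k h f x = symmDiffK k h g x := by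
  unfold symmDiffK
  exact Finset.sum_congr rfl fun i hi => by rw [hfg i hi]

lemma hasDerivAt_symmDiffK (k : ℕ) (h : ℝ) (f f' : ℝ → ℝ) (y : ℝ)
    (hf : ∀ i ∈ Finset.range (k+1), HasDerivAt f (f' (y - k * h / 2 + i * h)) (y - k * h / 2 + i * h)) :
    HasDerivAt (fun z => symmDiffK k h f z) (symmDiffK k h f' y) y := by
  unfold symmDiffK
  refine HasDerivAt.fun_sum fun i hi => ?_
  have h1 : HasDerivAt (fun z : ℝ => z - k * h / 2 + i * h) 1 y := by
    simpa using ((hasDerivAt_id y).sub_const ((k : ℝ) * h / 2)).add_const ((i : ℝ) * h)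
  have h2 : HasDerivAt (fun z : ℝ => f (z - k * h / 2 + i * h))
      (f' (y - k * h / 2 + i * h)) y := by
    have h3 := (hf i hi).comp y h1; rwa [mul_one] at h3
  exact h2.const_mul _

lemma key_bound : ∀ (k : ℕ) (F : ℕ → ℝ → ℝ) (M h x a b : ℝ), 0 < h →
    (∀ j : ℕ, ∀ t : ℝ, a ≤ t → t ≤ b → HasDerivAt (F j) (F (j+1) t) t) →
    (∀ t : ℝ, a ≤ t → t ≤ b → |F k t| ≤ M) →
    a ≤ x - k * h / 2 → x + k * h / 2 ≤ b →
    |symmDiffK k h (F 0) x| ≤ h ^ k * M := by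
  intro k
  induction k with
  | zero =>
    intro F M h x a b hh _ hM hxa hxb
    rw [symmDiffK_zero]
    simpa using hM x (by simpa using hxa) (by simpa using hxb)
  | succ k ih =>
    intro F M h x a b hh hD hM hxa hxb
    have hcast : ((k+1 : ℕ) : ℝ) = (k : ℝ) + 1 := by push_cast; ring
    rw [hcast] at hxa hxb
    -- derivative of G := symmDiffK k h (F 0) on [x - h/2, x + h/2]
    have hG : ∀ y ∈ Set.Icc (x - h/2) (x + h/2),
        HasDerivAt (fun z => symmDiffK k h (F 0) z) (symmDiffK k h (F 1) y) y := by
      intro y hy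
      refine hasDerivAt_symmDiffK k h (F 0) (F 1) y fun i hi => ?_
      have hik : (i : ℝ) ≤ k := by exact_mod_cast Nat.lt_succ_iff.mp (Finset.mem_range.mp hi)
      have hi0 : (0 : ℝ) ≤ (i : ℝ) := Nat.cast_nonneg i
      refine hD 0 _ ?_ ?_
      · nlinarith [hy.1, hh.le]
      · nlinarith [hy.2, hh.le]
    have hlt : x - h/2 < x + h/2 := by linarith
    have hcont : ContinuousOn (fun z => symmDiffK k h (F 0) z) (Set.Icc (x - h/2) (x + h/2)) :=
      fun y hy => (hG y hy).continuousAt.continuousWithinAt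
    obtain ⟨ξ, hξ, hslope⟩ := exists_hasDerivAt_eq_slope (fun z => symmDiffK k h (F 0) z)
      (fun y => symmDiffK k h (F 1) y) hlt hcont (fun y hy => hG y (Set.mem_Icc_of_Ioo hy))
    have hdiff : x + h/2 - (x - h/2) = h := by ring
    rw [hdiff] at hslope
    have heq : symmDiffK (k+1) h (F 0) x = h * symmDiffK k h (F 1) ξ := by
      rw [symmDiffK_succ, hslope]
      field_simp
    rw [heq, abs_mul, abs_of_pos hh]
    have hIH : |symmDiffK k h (F 1) ξ| ≤ h ^ k * M := by
      refine ih (fun j => F (j+1)) M h ξ a b hh (fun j t ht1 ht2 => hD (j+1) t ht1 ht2)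
        (fun t ht1 ht2 => hM t ht1 ht2) ?_ ?_
      · nlinarith [hξ.1]
      · nlinarith [hξ.2]
    calc h * |symmDiffK k h (F 1) ξ| ≤ h * (h ^ k * M) := by
          exact mul_le_mul_of_nonneg_left hIH hh.le
      _ = h ^ (k+1) * M := by ring

lemma symmDiffK_neg (k : ℕ) (h : ℝ) (f : ℝ → ℝ) (hf : ∀ t, f (-t) = f t) (x : ℝ) :
    symmDiffK k h f (-x) = (-1) ^ k * symmDiffK k h f x := by
  unfold symmDiffK
  rw [Finset.mul_sum]
  rw [← Finset.sum_range_reflect (fun i => ((-1 : ℝ)) ^ (k - i) * (k.choose i : ℝ)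
    * f (-x - k * h / 2 + i * h)) (k+1)]
  refine Finset.sum_congr rfl fun j hj => ?_
  have hjk : j ≤ k := Nat.lt_succ_iff.mp (Finset.mem_range.mp hj)
  have h1 : k + 1 - 1 - j = k - j := by omega
  have h2 : k - (k - j) = j := by omega
  rw [h1, h2, Nat.choose_symm hjk]
  have harg : -x - k * h / 2 + ((k - j : ℕ) : ℝ) * h = -(x - k * h / 2 + j * h) := by
    have : ((k - j : ℕ) : ℝ) = (k : ℝ) - j := by
      push_cast [hjk]; ring
    rw [this]; ring
  rw [harg, hf]
  have hsign : ((-1 : ℝ)) ^ j = (-1) ^ k * (-1) ^ (k - j) := by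
    rw [← pow_add]
    have : k + (k - j) = j + 2 * (k - j) := by omega
    rw [this, pow_add, pow_mul]
    norm_num
  rw [hsign]; ring

lemma symmDiffK_h_zero (k : ℕ) (hk : 1 ≤ k) (f : ℝ → ℝ) (x : ℝ) :
    symmDiffK k 0 f x = 0 := by
  have hb := add_pow (1 : ℝ) (-1) k
  simp only [add_neg_cancel, one_pow, one_mul] at hb
  rw [zero_pow (by omega)] at hb
  unfold symmDiffK
  have : ∀ i ∈ Finset.range (k+1), ((-1 : ℝ)) ^ (k - i) * (k.choose i : ℝ) * f (x - k * 0 / 2 + i * 0)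
      = ((-1 : ℝ)) ^ (k - i) * (k.choose i : ℝ) * f x := by
    intro i _
    norm_num
  rw [Finset.sum_congr rfl this, ← Finset.sum_mul, ← hb, zero_mul]

lemma pos_case (k : ℕ) (α : ℝ) (h0 : 0 < α) (hk : α < k) (h x : ℝ) (hh : 0 < h)
    (hx : (k : ℝ) * h < x) :
    |symmDiffK k h (fun t => |t| ^ α) x| ≤
      (|∏ i ∈ Finset.range k, (α - i)| * 2 ^ ((k : ℝ) - α)) * h ^ α := by
  have hk1 : (1 : ℝ) ≤ (k : ℝ) := by
    have : (0:ℝ) < k := h0.trans hk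
    exact_mod_cast Nat.one_le_iff_ne_zero.mpr (by exact_mod_cast Nat.pos_of_ne_zero (by
      intro hz; rw [hz] at this; norm_num at this) |>.ne')
  set a := x - k * h / 2 with hadef
  set b := x + k * h / 2 with hbdef
  have hah : h / 2 ≤ a := by
    have : (k : ℝ) * h / 2 ≥ h / 2 := by nlinarith
    nlinarith
  have ha : 0 < a := lt_of_lt_of_le (by positivity) hah
  set F : ℕ → ℝ → ℝ := fun j t => (∏ i ∈ Finset.range j, (α - i)) * t ^ (α - j) with hF
  have hcongr : symmDiffK k h (fun t => |t| ^ α) x = symmDiffK k h (F 0) x := by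
    refine symmDiffK_congr k h _ _ x fun i hi => ?_
    have hnode : 0 < x - k * h / 2 + i * h := by
      have : (0:ℝ) ≤ (i : ℝ) * h := by positivity
      linarith [ha]
    simp [hF, abs_of_pos hnode]
  have hD : ∀ j : ℕ, ∀ t : ℝ, a ≤ t → t ≤ b → HasDerivAt (F j) (F (j+1) t) t := by
    intro j t ht1 _
    have ht : 0 < t := lt_of_lt_of_le ha ht1
    have hd := (Real.hasDerivAt_rpow_const (p := α - j) (Or.inl ht.ne')).const_mul
      (∏ i ∈ Finset.range j, (α - i))
    refine hd.congr_deriv ?_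
    rw [hF]
    simp only [Finset.prod_range_succ]
    rw [show α - ((j:ℕ)+1 : ℕ) = α - j - 1 by push_cast; ring]
    ring
  set P : ℝ := |∏ i ∈ Finset.range k, (α - i)| with hP
  have hM : ∀ t : ℝ, a ≤ t → t ≤ b → |F k t| ≤ P * a ^ (α - k) := by
    intro t ht1 _
    have ht : 0 < t := lt_of_lt_of_le ha ht1
    rw [hF]
    simp only [abs_mul]
    rw [abs_of_nonneg (Real.rpow_nonneg ht.le _)]
    exact mul_le_mul_of_nonneg_left
      (Real.rpow_le_rpow_of_nonpos ha ht1 (by linarith)) (abs_nonneg _)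
  have hkey := key_bound k F (P * a ^ (α - k)) h x a b hh hD hM (le_refl _) (le_refl _)
  rw [hcongr]
  refine hkey.trans ?_
  have h1 : a ^ (α - k) ≤ (h/2) ^ (α - k) :=
    Real.rpow_le_rpow_of_nonpos (by positivity) hah (by linarith)
  have h2 : ((h/2) : ℝ) ^ (α - k) = h ^ (α - k) * 2 ^ ((k : ℝ) - α) := by
    rw [Real.div_rpow hh.le (by norm_num : (0:ℝ) ≤ 2),
      show (k:ℝ) - α = -(α - (k:ℝ)) by ring, Real.rpow_neg (by norm_num : (0:ℝ) ≤ 2)]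
    ring
  have h3 : h ^ k * h ^ (α - k) = h ^ α := by
    rw [← Real.rpow_natCast h k, ← Real.rpow_add hh]
    ring_nf
  calc h ^ k * (P * a ^ (α - k)) ≤ h ^ k * (P * ((h/2) ^ (α - k))) := by
        refine mul_le_mul_of_nonneg_left (mul_le_mul_of_nonneg_left h1 (abs_nonneg _)) (by positivity)
    _ = (P * 2 ^ ((k : ℝ) - α)) * h ^ α := by rw [h2, ← h3]; ring

lemma trivial_bound (k : ℕ) (α : ℝ) (h0 : 0 < α) (h x : ℝ) (hh : 0 ≤ h)
    (hx1 : |x - k * h / 2| ≤ 1) (hx2 : |x + k * h / 2| ≤ 1) :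
    |symmDiffK k h (fun t => |t| ^ α) x| ≤ 2 ^ k := by
  unfold symmDiffK
  refine (Finset.abs_sum_le_sum_abs _ _).trans ?_
  have hterm : ∀ i ∈ Finset.range (k+1),
      |((-1 : ℝ)) ^ (k - i) * (k.choose i : ℝ) * |x - k * h / 2 + i * h| ^ α|
        ≤ (k.choose i : ℝ) := by
    intro i hi
    have hik : (i : ℝ) ≤ k := by exact_mod_cast Nat.lt_succ_iff.mp (Finset.mem_range.mp hi)
    have hnode : |x - k * h / 2 + i * h| ≤ 1 := by
      rw [abs_le] at hx1 hx2 ⊢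
      constructor
      · nlinarith [hx1.1, Nat.cast_nonneg (α := ℝ) i, hh]
      · nlinarith [hx2.2, hh]
    have h1 : |x - k * h / 2 + i * h| ^ α ≤ 1 :=
      Real.rpow_le_one (abs_nonneg _) hnode h0.le
    rw [abs_mul, abs_mul, abs_pow, abs_neg, abs_one, one_pow, one_mul,
      Nat.abs_cast, abs_of_nonneg (Real.rpow_nonneg (abs_nonneg _) _)]
    calc (k.choose i : ℝ) * |x - k * h / 2 + i * h| ^ α ≤ (k.choose i : ℝ) * 1 :=
          mul_le_mul_of_nonneg_left h1 (Nat.cast_nonneg _)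
      _ = _ := mul_one _
  refine (Finset.sum_le_sum hterm).trans ?_
  rw [← Nat.cast_sum, Nat.sum_range_choose]
  push_cast
  exact le_refl _

lemma halpha_bound (k : ℕ) (α : ℝ) (h0 : 0 < α) (hk : α < k) (h x : ℝ) (hh : 0 ≤ h) :
    |symmDiffK k h (fun t => |t| ^ α) x| ≤
      max ((2:ℝ) ^ k * ((3 * k / 2) : ℝ) ^ α)
        (|∏ i ∈ Finset.range k, (α - i)| * 2 ^ ((k : ℝ) - α)) * h ^ α := by
  set B := max ((2:ℝ) ^ k * ((3 * k / 2) : ℝ) ^ α)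
    (|∏ i ∈ Finset.range k, (α - i)| * 2 ^ ((k : ℝ) - α)) with hB
  have hk1 : 1 ≤ k := by
    by_contra hc
    push_neg at hc
    interval_cases k
    · simp at hk; linarith
  rcases eq_or_lt_of_le hh with heq | hpos
  · rw [← heq, symmDiffK_h_zero k hk1, Real.zero_rpow h0.ne', mul_zero, abs_zero]
  rcases le_or_gt |x| ((k : ℝ) * h) with hsmall | hbig
  · -- near zero case
    refine le_trans ?_ (mul_le_mul_of_nonneg_right (le_max_left _ _) (Real.rpow_nonneg hh _))
    unfold symmDiffK
    refine (Finset.abs_sum_le_sum_abs _ _).trans ?_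
    have hterm : ∀ i ∈ Finset.range (k+1),
        |((-1 : ℝ)) ^ (k - i) * (k.choose i : ℝ) * |x - k * h / 2 + i * h| ^ α|
          ≤ (k.choose i : ℝ) * (((3 * k / 2) : ℝ) ^ α * h ^ α) := by
      intro i hi
      have hik : (i : ℝ) ≤ k := by exact_mod_cast Nat.lt_succ_iff.mp (Finset.mem_range.mp hi)
      have hi0 : (0:ℝ) ≤ i := Nat.cast_nonneg i
      have hxk : |x| ≤ k * h := hsmall
      have hnode : |x - k * h / 2 + i * h| ≤ 3 * k / 2 * h := by
        rw [abs_le] at hxk ⊢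
        constructor
        · nlinarith [hxk.1]
        · nlinarith [hxk.2]
      have h1 : |x - k * h / 2 + i * h| ^ α ≤ (3 * k / 2 * h) ^ α :=
        Real.rpow_le_rpow (abs_nonneg _) hnode h0.le
      have h2 : ((3 * k / 2 * h) : ℝ) ^ α = ((3 * k / 2) : ℝ) ^ α * h ^ α := by
        have hk0 : (0:ℝ) ≤ 3 * k / 2 := by positivity
        exact Real.mul_rpow hk0 hh
      rw [abs_mul, abs_mul, abs_pow, abs_neg, abs_one, one_pow, one_mul,
        Nat.abs_cast, abs_of_nonneg (Real.rpow_nonneg (abs_nonneg _) _)]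
      rw [← h2]
      exact mul_le_mul_of_nonneg_left h1 (Nat.cast_nonneg _)
    refine (Finset.sum_le_sum hterm).trans ?_
    rw [← Finset.sum_mul, ← Nat.cast_sum, Nat.sum_range_choose]
    push_cast
    ring_nf
    exact le_refl _
  · -- away from zero
    refine le_trans ?_ (mul_le_mul_of_nonneg_right (le_max_right _ _) (Real.rpow_nonneg hh _))
    rcases lt_or_gt_of_ne (fun hx0 => by rw [hx0] at hbig; simp at hbig; nlinarith : x ≠ 0)
      with hneg | hposx
    · have hevn : ∀ t : ℝ, |(-t)| ^ α = |t| ^ α := by intro t; rw [abs_neg]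
      have := symmDiffK_neg k h (fun t => |t| ^ α) hevn (-x)
      rw [neg_neg] at this
      rw [this, abs_mul, abs_pow, abs_neg, abs_one, one_pow, one_mul]
      have hbx : (k : ℝ) * h < -x := by
        rw [abs_of_neg hneg] at hbig; exact hbig
      exact pos_case k α h0 hk h (-x) hpos hbx
    · have hbx : (k : ℝ) * h < x := by rw [abs_of_pos hposx] at hbig; exact hbig
      exact pos_case k α h0 hk h x hpos hbx

theorem stmt12 (k : ℕ) (α : ℝ) (h0 : 0 < α) (hk : α < k) (hceil : k = ⌈α⌉₊)
    (hhalf : ∀ m : ℕ, α ≠ 2 * m) :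
    ∃ c : ℝ, 0 < c ∧ ∀ δ : ℝ, 0 < δ →
      modulus k (fun x => |x| ^ α) δ ≤ c * min 1 (δ ^ α) := by
  set B := max ((2:ℝ) ^ k * ((3 * k / 2) : ℝ) ^ α)
    (|∏ i ∈ Finset.range k, (α - i)| * 2 ^ ((k : ℝ) - α)) with hBdef
  have hB0 : 0 ≤ B := le_trans (by positivity) (le_max_left _ _)
  refine ⟨2 ^ k + B, by positivity, fun δ hδ => ?_⟩
  have hmin0 : 0 ≤ min 1 (δ ^ α) := le_min (by norm_num) (Real.rpow_nonneg hδ.le _)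
  refine Real.sSup_le ?_ (by positivity)
  rintro d ⟨h, x, hh0, hhδ, hx1, hx2, rfl⟩
  rcases le_or_gt 1 δ with h1δ | h1δ
  · have : (1:ℝ) ≤ δ ^ α := Real.one_le_rpow h1δ h0.le
    rw [min_eq_left this]
    calc |symmDiffK k h (fun t => |t| ^ α) x| ≤ 2 ^ k := trivial_bound k α h0 h x hh0 hx1 hx2
      _ ≤ (2 ^ k + B) * 1 := by linarith
  · have hδα1 : δ ^ α ≤ 1 := Real.rpow_le_one hδ.le h1δ.le h0.le
    rw [min_eq_right hδα1]
    have hstep : |symmDiffK k h (fun t => |t| ^ α) x| ≤ B * h ^ α :=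
      halpha_bound k α h0 hk h x hh0
    have hmono : h ^ α ≤ δ ^ α := Real.rpow_le_rpow hh0 hhδ h0.le
    calc |symmDiffK k h (fun t => |t| ^ α) x| ≤ B * h ^ α := hstep
      _ ≤ B * δ ^ α := mul_le_mul_of_nonneg_left hmono hB0
      _ ≤ (2 ^ k + B) * δ ^ α := by
          refine mul_le_mul_of_nonneg_right ?_ (Real.rpow_nonneg hδ.le _)
          linarith [pow_pos (by norm_num : (0:ℝ) < 2) k]
end
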